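/- Every finite subgroup of a Coxeter group W is contained in a conjugate of a parabolic subgroup W_T of finite order, for some subset T of the Coxeter generating set S. -/

import Mathlib

open CoxeterSystem Real
noncomputable section
namespace TitsProof
variable {B : Type} {M : CoxeterMatrix B}

def kk (M : CoxeterMatrix B) (i j : B) : ℝ := - Real.cos (Real.pi / M.M i j)
lemma kk_symm (i j : B) : kk M i j = kk M j i := by rw [kk, kk, M.symmetric]
lemma kk_diag (i : B) : kk M i i = 1 := by simp [kk, M.diagonal]

abbrev V (B : Type) : Type := B →₀ ℝ
def al (i : B) : V B := Finsupp.single i 1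

def Bf (M : CoxeterMatrix B) : V B →ₗ[ℝ] V B →ₗ[ℝ] ℝ :=
  Finsupp.lift _ ℝ B (fun i => Finsupp.lift ℝ ℝ B (fun j => kk M i j))

lemma Bf_single_single (i j : B) (x y : ℝ) :
    Bf M (Finsupp.single i x) (Finsupp.single j y) = x * (y * kk M i j) := by
  simp [Bf, Finsupp.lift_apply, Finsupp.sum_single_index]

lemma Bf_al_al (i j : B) : Bf M (al i) (al j) = kk M i j := by
  simp [al, Bf_single_single]

lemma Bf_symm (u v : V B) : Bf M u v = Bf M v u := by
  induction u using Finsupp.induction_linear with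
  | zero => simp
  | add f g hf hg => simp [hf, hg]
  | single a b =>
    induction v using Finsupp.induction_linear with
    | zero => simp
    | add f g hf hg => simp [hf, hg]
    | single a' b' => simp [Bf_single_single, kk_symm]; ring

def sig (M : CoxeterMatrix B) (i : B) : Module.End ℝ (V B) :=
  LinearMap.id - (2 : ℝ) • (Bf M (al i)).smulRight (al i)

lemma sig_apply (i : B) (v : V B) : sig M i v = v - (2 * Bf M (al i) v) • al i := by
  simp only [sig, LinearMap.sub_apply, LinearMap.smul_apply, LinearMap.id_apply,
    LinearMap.smulRight_apply, smul_smul]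

lemma Bf_al_sig (i : B) (v : V B) : Bf M (al i) (sig M i v) = - Bf M (al i) v := by
  simp [sig_apply, Bf_al_al, kk_diag]; ring

lemma sig_sig (i : B) (v : V B) : sig M i (sig M i v) = v := by
  rw [sig_apply (v := sig M i v), Bf_al_sig, sig_apply]
  module

lemma sig_al_self (i : B) : sig M i (al i) = - al i := by
  rw [sig_apply, Bf_al_al, kk_diag]
  module

lemma sig_smul_add (i : B) (x y : ℝ) (u w : V B) :
    sig M i (x • u + y • w) = x • sig M i u + y • sig M i w := by
  simp

lemma Bf_sig_sig (i : B) (u v : V B) : Bf M (sig M i u) (sig M i v) = Bf M u v := by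
  rw [sig_apply, sig_apply]
  simp only [map_sub, map_smul, LinearMap.sub_apply, LinearMap.smul_apply, Bf_al_al, kk_diag,
    smul_eq_mul]
  rw [Bf_symm u (al i)]
  ring


def cheb (c : ℝ) : ℕ → ℝ
  | 0 => 1
  | 1 => 2*c
  | (n+2) => 2*c * cheb c (n+1) - cheb c n

lemma cheb_mul_sin (θ : ℝ) : ∀ n : ℕ, cheb (cos θ) n * sin θ = sin ((n+1)*θ)
  | 0 => by simp [cheb]
  | 1 => by
      show 2 * cos θ * sin θ = _
      push_cast
      rw [show ((1:ℝ)+1)*θ = θ + θ by ring, sin_add]; ring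
  | (n+2) => by
      have h1 := cheb_mul_sin θ (n+1)
      have h2 := cheb_mul_sin θ n
      show (2 * cos θ * cheb (cos θ) (n+1) - cheb (cos θ) n) * sin θ = _
      have key : ∀ a, sin (a + θ) = 2*cos θ * sin a - sin (a - θ) := by
        intro a; rw [sin_add, sin_sub]; ring
      have e1 : ((n:ℝ)+2+1)*θ = ((n:ℝ)+2)*θ + θ := by ring
      have e2 : ((n:ℝ)+2)*θ - θ = ((n:ℝ)+1)*θ := by ring
      push_cast at h1 h2 ⊢
      rw [show ((n:ℝ)+1+1)*θ = ((n:ℝ)+2)*θ by ring] at h1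
      rw [e1, key, e2, ← h1, ← h2]; ring

section mfixed
variable {k : ℕ}

lemma sin_pos_pi_div (k : ℕ) : 0 < sin (π / (k+2)) := by
  apply sin_pos_of_pos_of_lt_pi
  · positivity
  · rw [div_lt_iff₀ (by positivity)]
    nlinarith [pi_pos, (by exact_mod_cast Nat.le_add_left 2 k : (2:ℝ) ≤ (k:ℝ)+2)]

lemma cheb_nonneg {n : ℕ} (hn : (n:ℝ)+1 ≤ (k:ℝ)+2) :
    0 ≤ cheb (cos (π / (k+2))) n := by
  have hs := sin_pos_pi_div k
  have h := cheb_mul_sin (π / (k+2)) n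
  nlinarith [sin_nonneg_of_nonneg_of_le_pi (x := ((n:ℝ)+1) * (π / (k+2)))
    (by positivity)
    (by rw [← mul_div_assoc, div_le_iff₀ (by positivity : (0:ℝ) < (k:ℝ)+2)]
        nlinarith [pi_pos])]

lemma cheb_top2 : cheb (cos (π / (k+2))) (2*k+2) = -1 := by
  have hs := sin_pos_pi_div k
  have h := cheb_mul_sin (π / (k+2)) (2*k+2)
  have e : ((2*k+2:ℕ):ℝ)+1 = 2*((k:ℝ)+2) - 1 := by push_cast; ring
  rw [e] at h
  have : (2*((k:ℝ)+2) - 1) * (π / (k+2)) = -(π/(k+2)) + 2*π := by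
    field_simp; ring
  rw [this, sin_add_two_pi, sin_neg,
    show -sin (π/((k:ℝ)+2)) = (-1) * sin (π/((k:ℝ)+2)) by ring] at h
  exact mul_right_cancel₀ hs.ne' h

lemma cheb_top1 : cheb (cos (π / (k+2))) (2*k+3) = 0 := by
  have hs := sin_pos_pi_div k
  have h := cheb_mul_sin (π / (k+2)) (2*k+3)
  have e : ((2*k+3:ℕ):ℝ)+1 = 2*((k:ℝ)+2) := by push_cast; ring
  rw [e] at h
  have : (2*((k:ℝ)+2)) * (π / (k+2)) = 0 + 2*π := by field_simp; ring
  rw [this, sin_add_two_pi, sin_zero] at h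
  exact (mul_eq_zero.mp h).resolve_right hs.ne'

lemma cheb_top0 : cheb (cos (π / (k+2))) (2*k+4) = 1 := by
  have hs := sin_pos_pi_div k
  have h := cheb_mul_sin (π / (k+2)) (2*k+4)
  have e : ((2*k+4:ℕ):ℝ)+1 = 2*((k:ℝ)+2) + 1 := by push_cast; ring
  rw [e] at h
  have : (2*((k:ℝ)+2) + 1) * (π / (k+2)) = (π/(k+2)) + 2*π := by field_simp; ring
  rw [this, sin_add_two_pi] at h
  have := mul_right_cancel₀ (ne_of_gt hs) (h.trans (one_mul _).symm)
  exact this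

end mfixed

end TitsProof

namespace TitsProof
open Real
variable {B : Type} {M : CoxeterMatrix B}

lemma Bf_al_plane_i (i j : B) (x y : ℝ) :
    Bf M (al i) (x • al i + y • al j) = x + y * kk M i j := by
  simp [map_add, map_smul, Bf_al_al, kk_diag]

lemma sig_plane_i (i j : B) (x y : ℝ) :
    sig M i (x • al i + y • al j) = (-x - 2 * kk M i j * y) • al i + y • al j := by
  rw [sig_apply, Bf_al_plane_i]
  module

lemma sig_plane_j (i j : B) (x y : ℝ) :
    sig M j (x • al i + y • al j) = x • al i + (-2 * kk M i j * x - y) • al j := by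
  rw [sig_apply]
  rw [map_add, map_smul, map_smul, Bf_al_al, Bf_al_al, kk_diag, kk_symm]
  simp only [smul_eq_mul]
  module

lemma al_eq_plane (i j : B) : al i = (1:ℝ) • al i + (0:ℝ) • al j := by module
lemma al_eq_plane' (i j : B) : al j = (0:ℝ) • al i + (1:ℝ) • al j := by module

section braidsec
variable (i j : B) {c : ℝ} (hc : kk M i j = -c)
include hc

lemma G_pow_al_i : ∀ n : ℕ, ((sig M i * sig M j)^(n+1)) (al i)
    = cheb c (2*n+2) • al i + cheb c (2*n+1) • al j := by
  intro n
  induction n with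
  | zero =>
    rw [pow_one, Module.End.mul_apply, al_eq_plane i j, sig_plane_j i j, sig_plane_i i j, hc]
    have h1 : cheb c (2*0+1) = 2*c := rfl
    have h2 : cheb c (2*0+2) = 2*c*(2*c) - 1 := rfl
    rw [h1, h2]
    ring_nf
    module
  | succ n ih =>
    rw [pow_succ', Module.End.mul_apply, ih, Module.End.mul_apply, sig_plane_j i j,
      sig_plane_i i j, hc]
    have h1 : cheb c (2*(n+1)+1) = 2*c*(cheb c (2*n+2)) - cheb c (2*n+1) := by
      show cheb c ((2*n+1)+2) = _; rw [cheb]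
    have h2 : cheb c (2*(n+1)+2) = 2*c*(cheb c (2*(n+1)+1)) - cheb c (2*n+2) := by
      show cheb c ((2*n+2)+2) = _; rw [cheb]; congr 2
    rw [h2, h1]
    ring_nf

lemma G_pow_al_j : ∀ n : ℕ, ((sig M i * sig M j)^(n+1)) (al j)
    = (- cheb c (2*n+1)) • al i + (- cheb c (2*n)) • al j := by
  intro n
  induction n with
  | zero =>
    rw [pow_one, Module.End.mul_apply, al_eq_plane' i j, sig_plane_j i j, sig_plane_i i j, hc]
    have h1 : cheb c (2*0+1) = 2*c := rfl
    have h0 : cheb c (2*0) = 1 := rfl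
    rw [h1, h0]
    ring_nf
    module
  | succ n ih =>
    rw [pow_succ', Module.End.mul_apply, ih, Module.End.mul_apply, sig_plane_j i j,
      sig_plane_i i j, hc]
    have h1 : cheb c (2*(n+1)) = 2*c*(cheb c (2*n+1)) - cheb c (2*n) := by
      show cheb c ((2*n)+2) = _; rw [cheb]
    have h2 : cheb c (2*(n+1)+1) = 2*c*(cheb c (2*(n+1))) - cheb c (2*n+1) := by
      show cheb c ((2*n+1)+2) = _; rw [cheb]; congr 2
    rw [h2, h1]
    ring_nf

end braidsec

theorem sig_braid (i j : B) (hij : i ≠ j) (hm : M.M i j ≠ 0) :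
    (sig M i * sig M j)^(M.M i j) = 1 := by
  obtain ⟨k, hk⟩ : ∃ k, M.M i j = k + 2 := by
    have h1 := M.off_diagonal i j hij
    exact ⟨M.M i j - 2, by omega⟩
  set c : ℝ := cos (π / ((k:ℝ)+2)) with hcdef
  have hc : kk M i j = -c := by
    rw [kk, hk]; push_cast; rfl
  have hs := sin_pos_pi_div k
  have hd : (1:ℝ) - c^2 = sin (π / ((k:ℝ)+2))^2 := by
    have := sin_sq_add_cos_sq (π / ((k:ℝ)+2))
    rw [hcdef]; nlinarith [this]
  have hdpos : (0:ℝ) < 1 - c^2 := by rw [hd]; positivity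
  apply LinearMap.ext
  intro v
  set a := Bf M (al i) v with ha
  set b := Bf M (al j) v with hb
  set lam := (a + c*b)/(1-c^2) with hlam
  set mu := (b + c*a)/(1-c^2) with hmu
  set v₀ := v - lam • al i - mu • al j with hv0
  have hqi : Bf M (al i) v₀ = 0 := by
    rw [hv0]
    simp only [map_sub, map_smul, Bf_al_al, kk_diag, smul_eq_mul, hc]
    rw [← ha, hlam, hmu]
    field_simp
    ring
  have hqj : Bf M (al j) v₀ = 0 := by
    rw [hv0]
    simp only [map_sub, map_smul, Bf_al_al, kk_diag, smul_eq_mul, hc, kk_symm j i]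
    rw [← hb, hlam, hmu]
    field_simp
    ring
  have hj' : sig M j v₀ = v₀ := by rw [sig_apply, hqj]; simp
  have hi' : sig M i v₀ = v₀ := by rw [sig_apply, hqi]; simp
  have hGv0 : (sig M i * sig M j) v₀ = v₀ := by
    rw [Module.End.mul_apply, hj', hi']
  have hGnv0 : ∀ n : ℕ, ((sig M i * sig M j)^n) v₀ = v₀ := by
    intro n
    induction n with
    | zero => simp
    | succ n ih => rw [pow_succ', Module.End.mul_apply, ih, hGv0]
  have hvdecomp : v = v₀ + lam • al i + mu • al j := by rw [hv0]; module
  have hGi : ((sig M i * sig M j)^(M.M i j)) (al i) = al i := by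
    rw [hk, show k + 2 = (k+1)+1 by ring, G_pow_al_i i j hc (k+1),
      show 2*(k+1)+2 = 2*k+4 by ring, show 2*(k+1)+1 = 2*k+3 by ring,
      cheb_top0, cheb_top1]
    module
  have hGj : ((sig M i * sig M j)^(M.M i j)) (al j) = al j := by
    rw [hk, show k + 2 = (k+1)+1 by ring, G_pow_al_j i j hc (k+1),
      show 2*(k+1)+1 = 2*k+3 by ring, show 2*(k+1) = 2*k+2 by ring,
      cheb_top1, cheb_top2]
    module
  calc ((sig M i * sig M j)^(M.M i j)) v
      = ((sig M i * sig M j)^(M.M i j)) v₀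
        + lam • ((sig M i * sig M j)^(M.M i j)) (al i)
        + mu • ((sig M i * sig M j)^(M.M i j)) (al j) := by
        rw [hvdecomp]; simp [map_add, map_smul]
    _ = v₀ + lam • al i + mu • al j := by rw [hGnv0, hGi, hGj]
    _ = v := by rw [← hvdecomp]
    _ = (1 : Module.End ℝ (V B)) v := rfl

theorem sig_liftable : M.IsLiftable (sig M) := by
  intro i i'
  by_cases hij : i = i'
  · subst hij
    rw [M.diagonal, pow_one]
    apply LinearMap.ext
    intro v
    rw [Module.End.mul_apply, sig_sig]
    rfl
  · by_cases hm : M.M i i' = 0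
    · rw [hm, pow_zero]
    · exact sig_braid i i' hij hm

variable {W : Type} [Group W]

/-- The geometric representation. -/
def rho (cs : CoxeterSystem M W) : W →* Module.End ℝ (V B) :=
  cs.lift ⟨sig M, sig_liftable⟩

lemma rho_simple (cs : CoxeterSystem M W) (i : B) : rho cs (cs.simple i) = sig M i :=
  cs.lift_apply_simple sig_liftable i

lemma rho_inv_apply (cs : CoxeterSystem M W) (w : W) (v : V B) :
    rho cs w⁻¹ (rho cs w v) = v := by
  rw [← Module.End.mul_apply, ← map_mul, inv_mul_cancel, map_one, Module.End.one_apply]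

lemma rho_Bf (cs : CoxeterSystem M W) (w : W) : ∀ u v : V B,
    Bf M (rho cs w u) (rho cs w v) = Bf M u v := by
  induction w using cs.simple_induction with
  | simple i => intro u v; rw [rho_simple]; exact Bf_sig_sig i u v
  | one => intro u v; simp
  | mul w₁ w₂ h₁ h₂ =>
    intro u v
    rw [map_mul, Module.End.mul_apply, Module.End.mul_apply, h₁, h₂]

end TitsProof

namespace TitsProof
open Real CoxeterSystem List
variable {B : Type} {M : CoxeterMatrix B} {W : Type} [Group W]

/-- positive vectors -/
def Pos (v : V B) : Prop := (∀ b, 0 ≤ v b) ∧ v ≠ 0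
/-- negative vectors -/
def NegV (v : V B) : Prop := (∀ b, v b ≤ 0) ∧ v ≠ 0

lemma Pos_al (i : B) : Pos (al i) := by
  classical
  constructor
  · intro b
    rw [al, Finsupp.single_apply]
    split <;> norm_num
  · simp [al]

lemma not_Pos_and_NegV {v : V B} (h1 : Pos v) (h2 : NegV v) : False := by
  apply h1.2
  ext b
  exact le_antisymm (h2.1 b) (h1.1 b)

lemma kk_infty {i j : B} (h : M.M i j = 0) : kk M i j = -1 := by
  rw [kk, h]; norm_num

lemma cheb_one_pos : ∀ n : ℕ, (0:ℝ) ≤ cheb 1 n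
  | 0 => by norm_num [cheb]
  | 1 => by norm_num [cheb]
  | (n+2) => by
    have h1 := cheb_one_pos (n+1)
    have h2 := cheb_one_pos n
    have h3 : ∀ m : ℕ, cheb 1 m = m + 1 := by
      intro m
      induction m using Nat.twoStepInduction with
      | zero => norm_num [cheb]
      | one => norm_num [cheb]
      | more m ih1 ih2 => rw [cheb, ih1, ih2]; push_cast; ring
    rw [h3]; positivity

/-- coefficients of the action of an alternating word on a simple root -/
lemma rho_alt_formula (cs : CoxeterSystem M W) (i j : B) {c : ℝ} (hc : kk M i j = -c) :
    ∀ k : ℕ,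
    (rho cs (cs.wordProd (alternatingWord i j (2*k))) (al i)
      = cheb c (2*k) • al i + (if k = 0 then 0 else cheb c (2*k-1)) • al j) ∧
    (rho cs (cs.wordProd (alternatingWord i j (2*k+1))) (al i)
      = cheb c (2*k) • al i + cheb c (2*k+1) • al j) := by
  have step : ∀ n : ℕ, ∀ u : V B,
      rho cs (cs.wordProd (alternatingWord i j (n+1))) (al i)
      = sig M (if Even n then j else i) (rho cs (cs.wordProd (alternatingWord i j n)) (al i)) := by
    intro n u
    rw [alternatingWord_succ', wordProd_cons, map_mul, Module.End.mul_apply, rho_simple]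
  intro k
  induction k with
  | zero =>
    constructor
    · simp only [Nat.mul_zero, if_pos rfl]
      show rho cs (cs.wordProd []) (al i) = cheb c 0 • al i + (0:ℝ) • al j
      rw [wordProd_nil, map_one, Module.End.one_apply]
      show al i = (1:ℝ) • al i + (0:ℝ) • al j
      module
    · show rho cs (cs.wordProd (alternatingWord i j (0+1))) (al i) = _
      rw [step 0 (al i)]
      rw [if_pos Even.zero]
      show sig M j (rho cs (cs.wordProd (alternatingWord i j 0)) (al i)) = _
      rw [show alternatingWord i j 0 = [] from rfl, wordProd_nil, map_one, Module.End.one_apply,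
        sig_apply, Bf_al_al, kk_symm j i, hc]
      have h0 : cheb c (2*0) = 1 := rfl
      have h1 : cheb c (2*0+1) = 2*c := rfl
      rw [h0, h1]
      module
  | succ k ih =>
    have heven : rho cs (cs.wordProd (alternatingWord i j (2*(k+1)))) (al i)
        = cheb c (2*(k+1)) • al i + cheb c (2*k+1) • al j := by
      have e : 2*(k+1) = (2*k+1)+1 := by ring
      rw [e, step (2*k+1) (al i)]
      have : ¬ Even (2*k+1) := by simp [Nat.even_add_one, parity_simps]
      rw [if_neg this, ih.2, sig_plane_i i j, hc]
      have h2 : cheb c (2*k+1+1) = 2*c*(cheb c (2*k+1)) - cheb c (2*k) := by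
        show cheb c ((2*k)+2) = _; rw [cheb]
      rw [h2]
      module
    constructor
    · rw [heven]
      have : ¬ (k+1 = 0) := k.succ_ne_zero
      rw [if_neg this, show 2*(k+1)-1 = 2*k+1 by omega]
    · have e : 2*(k+1)+1 = (2*(k+1))+1 := rfl
      rw [e, step (2*(k+1)) (al i)]
      have : Even (2*(k+1)) := ⟨k+1, by ring⟩
      rw [if_pos this, heven, sig_plane_j i j, hc]
      have h3 : cheb c (2*(k+1)+1) = 2*c*(cheb c (2*(k+1))) - cheb c (2*k+1) := by
        show cheb c ((2*k+1)+2) = _; rw [cheb, show 2*k+1+1 = 2*(k+1) by omega]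
      rw [h3]
      module

/-- nonnegative coefficients version -/
lemma rho_alt_nonneg (cs : CoxeterSystem M W) (i j : B) (n : ℕ)
    (hn : M.M i j = 0 ∨ n + 1 ≤ M.M i j) :
    ∃ lam mu : ℝ, 0 ≤ lam ∧ 0 ≤ mu ∧
      rho cs (cs.wordProd (alternatingWord i j n)) (al i) = lam • al i + mu • al j := by
  by_cases hn0 : n = 0
  · subst hn0
    refine ⟨1, 0, zero_le_one, le_rfl, ?_⟩
    show rho cs (cs.wordProd []) (al i) = _
    rw [wordProd_nil, map_one, Module.End.one_apply]
    show al i = (1:ℝ) • al i + (0:ℝ) • al j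
    module
  obtain ⟨c, hc, hpos⟩ : ∃ c : ℝ, kk M i j = -c ∧ ∀ d ≤ n, 0 ≤ cheb c d := by
    rcases hn with h0 | hle
    · exact ⟨1, kk_infty h0, fun d _ => cheb_one_pos d⟩
    · obtain ⟨k, hk⟩ : ∃ k, M.M i j = k + 2 := ⟨M.M i j - 2, by omega⟩
      refine ⟨cos (π / ((k:ℝ)+2)), by rw [kk, hk]; push_cast; rfl, ?_⟩
      intro d hd
      apply cheb_nonneg
      have : d + 1 ≤ k + 2 := by omega
      exact_mod_cast this
  rcases Nat.even_or_odd n with ⟨k, hk⟩ | ⟨k, hk⟩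
  · subst hk
    refine ⟨cheb c (2*k), if k = 0 then 0 else cheb c (2*k-1), hpos _ (by omega), ?_, ?_⟩
    · split
      · exact le_rfl
      · exact hpos _ (by omega)
    · rw [show k + k = 2*k by ring]
      exact (rho_alt_formula cs i j hc k).1
  · subst hk
    refine ⟨cheb c (2*k), cheb c (2*k+1), hpos _ (by omega), hpos _ (by omega), ?_⟩
    exact (rho_alt_formula cs i j hc k).2

end TitsProof

namespace TitsProof
open Real CoxeterSystem List
variable {B : Type} {M : CoxeterMatrix B} {W : Type} [Group W]

lemma strip (cs : CoxeterSystem M W) (i j : B) : ∀ n (w : W), cs.length w ≤ n →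
    ∃ (v : W) (L : List B), w = v * cs.wordProd L ∧
      cs.length w = cs.length v + L.length ∧ (∀ x ∈ L, x = i ∨ x = j) ∧
      ¬cs.IsRightDescent v i ∧ ¬cs.IsRightDescent v j := by
  intro n
  induction n with
  | zero =>
    intro w hw
    have hw1 : w = 1 := cs.length_eq_zero_iff.mp (Nat.le_zero.mp hw)
    subst hw1
    exact ⟨1, [], by simp, by simp, by simp, cs.not_isRightDescent_one i,
      cs.not_isRightDescent_one j⟩
  | succ n ih =>
    intro w hw
    by_cases hdi : cs.IsRightDescent w i
    · have hlt : cs.length (w * cs.simple i) ≤ n := by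
        have := hdi
        unfold CoxeterSystem.IsRightDescent at this
        omega
      obtain ⟨v, L, hprod, hlen, hmem, hvi, hvj⟩ := ih (w * cs.simple i) hlt
      refine ⟨v, L ++ [i], ?_, ?_, ?_, hvi, hvj⟩
      · rw [wordProd_append, wordProd_singleton, ← mul_assoc, ← hprod]
        rw [mul_assoc, cs.simple_mul_simple_self, mul_one]
      · rw [List.length_append, List.length_singleton]
        have := hdi
        unfold CoxeterSystem.IsRightDescent at this
        have h2 := cs.length_mul_simple w i
        rcases h2 with h2 | h2
        · omega
        · omega
      · intro x hx
        rcases List.mem_append.mp hx with hx | hx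
        · exact hmem x hx
        · left; simpa using hx
    · by_cases hdj : cs.IsRightDescent w j
      · have hlt : cs.length (w * cs.simple j) ≤ n := by
          have := hdj
          unfold CoxeterSystem.IsRightDescent at this
          omega
        obtain ⟨v, L, hprod, hlen, hmem, hvi, hvj⟩ := ih (w * cs.simple j) hlt
        refine ⟨v, L ++ [j], ?_, ?_, ?_, hvi, hvj⟩
        · rw [wordProd_append, wordProd_singleton, ← mul_assoc, ← hprod]
          rw [mul_assoc, cs.simple_mul_simple_self, mul_one]
        · rw [List.length_append, List.length_singleton]
          have := hdj
          unfold CoxeterSystem.IsRightDescent at this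
          have h2 := cs.length_mul_simple w j
          rcases h2 with h2 | h2
          · omega
          · omega
        · intro x hx
          rcases List.mem_append.mp hx with hx | hx
          · exact hmem x hx
          · right; simpa using hx
      · exact ⟨w, [], by simp, by simp, by simp, hdi, hdj⟩

lemma not_isReduced_cons_cons (cs : CoxeterSystem M W) (x : B) (rest : List B) :
    ¬ cs.IsReduced (x :: x :: rest) := by
  intro h
  unfold CoxeterSystem.IsReduced at h
  rw [wordProd_cons, wordProd_cons, cs.simple_mul_simple_cancel_left] at h
  have := cs.length_wordProd_le rest
  simp at h
  omega

lemma alt_shape (cs : CoxeterSystem M W) (i j : B) (hij : i ≠ j) : ∀ L : List B,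
    (∀ x ∈ L, x = i ∨ x = j) → cs.IsReduced (L ++ [i]) →
    L = alternatingWord i j L.length := by
  intro L
  induction L with
  | nil => intro _ _; rfl
  | cons x L' ihL =>
    intro hmem hred
    have hredL' : cs.IsReduced (L' ++ [i]) := by
      have := CoxeterSystem.IsReduced.drop (ω := (x :: L') ++ [i]) hred 1
      simpa using this
    have hL' : L' = alternatingWord i j L'.length :=
      ihL (fun y hy => hmem y (List.mem_cons_of_mem x hy)) hredL'
    have hxmem : x = i ∨ x = j := hmem x (List.mem_cons_self)
    have hxne : ∀ y rest, (L' ++ [i]) = y :: rest → x ≠ y := by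
      intro y rest hy hxy
      subst hxy
      apply not_isReduced_cons_cons cs x rest
      have : (x :: L') ++ [i] = x :: x :: rest := by rw [List.cons_append, hy]
      rwa [this] at hred
    have hx : x = (if Even L'.length then j else i) := by
      rcases Nat.eq_zero_or_pos L'.length with h0 | hpos
      · have : L' = [] := List.eq_nil_of_length_eq_zero h0
        subst this
        have := hxne i [] (by simp)
        rcases hxmem with rfl | rfl
        · exact absurd rfl this
        · simp
      · obtain ⟨m, hm⟩ : ∃ m, L'.length = m + 1 := ⟨L'.length - 1, by omega⟩
        have hhead : L' ++ [i] = (if Even m then j else i) :: (alternatingWord i j m ++ [i]) := by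
          rw [hL', hm, alternatingWord_succ']
          simp
        have hne := hxne _ _ hhead
        rw [hm]
        rcases hxmem with rfl | rfl
        · rcases Nat.even_or_odd m with he | ho
          · rw [if_neg (by simp [Nat.even_add_one, he])]
          · exact absurd rfl (by rwa [if_neg (Nat.not_even_iff_odd.mpr ho)] at hne)
        · rcases Nat.even_or_odd m with he | ho
          · exact absurd rfl (by rwa [if_pos he] at hne)
          · rw [if_pos (by simp [Nat.even_add_one, Nat.not_even_iff_odd, ho])]
    calc x :: L' = (if Even L'.length then j else i) :: alternatingWord i j L'.length := by
          rw [← hx, ← hL']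
      _ = alternatingWord i j (L'.length + 1) := (alternatingWord_succ' i j L'.length).symm
      _ = alternatingWord i j (x :: L').length := by rw [List.length_cons]

theorem rho_nonneg (cs : CoxeterSystem M W) : ∀ n (w : W), cs.length w ≤ n →
    ∀ i : B, ¬cs.IsRightDescent w i → ∀ b : B, 0 ≤ (rho cs w (al i)) b := by
  intro n
  induction n with
  | zero =>
    intro w hw i _ b
    have hw1 : w = 1 := cs.length_eq_zero_iff.mp (Nat.le_zero.mp hw)
    subst hw1
    rw [map_one, Module.End.one_apply]
    exact (Pos_al i).1 b
  | succ n ih =>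
    intro w hw i hdi b
    by_cases hw1 : w = 1
    · subst hw1
      rw [map_one, Module.End.one_apply]
      exact (Pos_al i).1 b
    obtain ⟨j, hdj⟩ := cs.exists_rightDescent_of_ne_one hw1
    have hij : i ≠ j := by rintro rfl; exact hdi hdj
    obtain ⟨v, L, hprod, hlen, hmem, hvi, hvj⟩ := strip cs i j (cs.length w) w le_rfl
    have hLne : L ≠ [] := by
      rintro rfl
      rw [wordProd_nil, mul_one] at hprod
      subst hprod
      exact hvj hdj
    have hLpos : 0 < L.length := List.length_pos_iff.mpr hLne
    have hvle : cs.length v ≤ n := by omega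
    have hlenwi : cs.length (w * cs.simple i) = cs.length w + 1 := by
      have h2 := cs.length_mul_simple w i
      unfold CoxeterSystem.IsRightDescent at hdi
      omega
    have hred2 : cs.IsReduced (L ++ [i]) := by
      have heq : w * cs.simple i = v * cs.wordProd (L ++ [i]) := by
        rw [hprod, wordProd_append, wordProd_singleton, mul_assoc]
      unfold CoxeterSystem.IsReduced
      have h1 := cs.length_wordProd_le (L ++ [i])
      have h2 := cs.length_mul_le v (cs.wordProd (L ++ [i]))
      rw [← heq] at h2
      rw [List.length_append, List.length_singleton] at h1 ⊢
      omega
    have hLalt : L = alternatingWord i j L.length := alt_shape cs i j hij L hmem hred2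
    have hbound : M.M i j = 0 ∨ L.length + 1 ≤ M.M i j := by
      by_cases h0 : M.M i j = 0
      · exact Or.inl h0
      right
      by_contra hgt
      push_neg at hgt
      have hnred := cs.not_isReduced_alternatingWord j i (m := L.length + 1)
        (by rw [M.symmetric j i]; exact h0) (by rw [M.symmetric j i]; omega)
      apply hnred
      rw [alternatingWord_succ, ← hLalt, List.concat_eq_append]
      exact hred2
    obtain ⟨lam, mu, hlam, hmu, halt⟩ := rho_alt_nonneg cs i j L.length hbound
    rw [← hLalt] at halt
    rw [hprod, map_mul, Module.End.mul_apply, halt, map_add, map_smul, map_smul]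
    rw [Finsupp.add_apply, Finsupp.smul_apply, Finsupp.smul_apply, smul_eq_mul, smul_eq_mul]
    exact add_nonneg (mul_nonneg hlam (ih v hvle i hvi b)) (mul_nonneg hmu (ih v hvle j hvj b))

end TitsProof

namespace TitsProof
open Real CoxeterSystem List
variable {B : Type} {M : CoxeterMatrix B} {W : Type} [Group W]

variable (cs : CoxeterSystem M W)

def IsRoot (β : V B) : Prop := ∃ w i, β = rho cs w (al i)

lemma rho_al_ne_zero (w : W) (i : B) : rho cs w (al i) ≠ 0 := by
  intro h
  have := rho_inv_apply cs w (al i)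
  rw [h, map_zero] at this
  exact (Pos_al i).2 this.symm

lemma pos_of_not_descent {w : W} {i : B} (h : ¬cs.IsRightDescent w i) :
    Pos (rho cs w (al i)) :=
  ⟨fun b => rho_nonneg cs (cs.length w) w le_rfl i h b, rho_al_ne_zero cs w i⟩

lemma rho_mul_simple_al (w : W) (i : B) :
    rho cs (w * cs.simple i) (al i) = - rho cs w (al i) := by
  rw [map_mul, Module.End.mul_apply, rho_simple, sig_al_self, map_neg]

lemma neg_of_descent {w : W} {i : B} (h : cs.IsRightDescent w i) :
    NegV (rho cs w (al i)) := by
  have h2 : ¬cs.IsRightDescent (w * cs.simple i) i :=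
    (cs.isRightDescent_iff_not_isRightDescent_mul).mp h
  have h3 := pos_of_not_descent cs h2
  have h4 : rho cs w (al i) = - rho cs (w * cs.simple i) (al i) := by
    rw [rho_mul_simple_al, neg_neg]
  constructor
  · intro b
    rw [h4]
    simp only [Finsupp.coe_neg, Pi.neg_apply, Left.neg_nonpos_iff]
    exact h3.1 b
  · rw [h4, neg_ne_zero]
    exact h3.2

lemma root_dichotomy {β : V B} (h : IsRoot cs β) : Pos β ∨ NegV β := by
  obtain ⟨w, i, rfl⟩ := h
  by_cases hd : cs.IsRightDescent w i
  · exact Or.inr (neg_of_descent cs hd)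
  · exact Or.inl (pos_of_not_descent cs hd)

lemma root_rho {β : V B} (u : W) (h : IsRoot cs β) : IsRoot cs (rho cs u β) := by
  obtain ⟨w, i, rfl⟩ := h
  exact ⟨u * w, i, by rw [map_mul, Module.End.mul_apply]⟩

lemma root_neg {β : V B} (h : IsRoot cs β) : IsRoot cs (-β) := by
  obtain ⟨w, i, rfl⟩ := h
  exact ⟨w * cs.simple i, i, by rw [rho_mul_simple_al]⟩

lemma root_al (i : B) : IsRoot cs (al i) := ⟨1, i, by rw [map_one, Module.End.one_apply]⟩

lemma root_ne_zero {β : V B} (h : IsRoot cs β) : β ≠ 0 := by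
  obtain ⟨w, i, rfl⟩ := h; exact rho_al_ne_zero cs w i

lemma sig_coord_ne (t : B) (β : V B) (b : B) (hb : b ≠ t) : (sig M t β) b = β b := by
  classical
  rw [sig_apply, Finsupp.sub_apply, Finsupp.smul_apply, al, Finsupp.single_apply,
    if_neg (fun h => hb h.symm)]
  simp

lemma Bf_root_self {β : V B} (h : IsRoot cs β) : Bf M β β = 1 := by
  obtain ⟨w, i, rfl⟩ := h
  rw [rho_Bf, Bf_al_al, kk_diag]

/-- σ_t permutes the positive roots other than α_t -/
lemma sig_perm (t : B) {β : V B} (hβ : IsRoot cs β) (hpos : Pos β) (hne : β ≠ al t) :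
    Pos (sig M t β) := by
  classical
  have hroot : IsRoot cs (sig M t β) := by
    have := root_rho cs (cs.simple t) hβ
    rwa [rho_simple] at this
  rcases root_dichotomy cs hroot with h | h
  · exact h
  exfalso
  have hcoord : ∀ b, b ≠ t → β b = 0 := by
    intro b hb
    have h1 := hpos.1 b
    have h2 := h.1 b
    rw [sig_coord_ne t β b hb] at h2
    linarith
  have hβsingle : β = Finsupp.single t (β t) := by
    ext b
    rw [Finsupp.single_apply]
    by_cases hb : t = b
    · subst hb; simp
    · rw [if_neg hb, hcoord b (fun hh => hb hh.symm)]
  have hBf : Bf M β β = 1 := Bf_root_self cs hβ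
  rw [hβsingle, Bf_single_single, kk_diag, mul_one] at hBf
  have htpos : 0 < β t := by
    rcases lt_or_eq_of_le (hpos.1 t) with h' | h'
    · exact h'
    · exfalso
      apply hpos.2
      rw [hβsingle, ← h']
      simp
  have : β t = 1 := by nlinarith
  apply hne
  rw [hβsingle, this]
  rfl

/-- inversion set -/
def invSet (v : W) : Set (V B) := {β | IsRoot cs β ∧ Pos β ∧ NegV (rho cs v β)}

lemma al_mem_invSet {v : W} {i : B} : al i ∈ invSet cs v ↔ cs.IsRightDescent v i := by
  constructor
  · intro ⟨_, _, hneg⟩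
    by_contra hd
    exact not_Pos_and_NegV (pos_of_not_descent cs hd) hneg
  · intro hd
    exact ⟨root_al cs i, Pos_al i, neg_of_descent cs hd⟩

lemma invSet_one : invSet cs 1 = ∅ := by
  ext β
  simp only [invSet, Set.mem_setOf_eq, Set.mem_empty_iff_false, iff_false]
  rintro ⟨hr, hp, hn⟩
  rw [map_one, Module.End.one_apply] at hn
  exact not_Pos_and_NegV hp hn

lemma invSet_mul_simple {v : W} {i : B} (hd : cs.IsRightDescent v i) :
    invSet cs (v * cs.simple i) = (sig M i) '' (invSet cs v \ {al i}) := by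
  ext β
  constructor
  · rintro ⟨hr, hp, hn⟩
    have hβne : β ≠ al i := by
      rintro rfl
      have h2 : ¬cs.IsRightDescent (v * cs.simple i) i :=
        (cs.isRightDescent_iff_not_isRightDescent_mul).mp hd
      exact not_Pos_and_NegV (pos_of_not_descent cs h2) hn
    refine ⟨sig M i β, ⟨⟨?_, ?_, ?_⟩, ?_⟩, sig_sig i β⟩
    · have := root_rho cs (cs.simple i) hr
      rwa [rho_simple] at this
    · exact sig_perm cs i hr hp hβne
    · have : rho cs v (sig M i β) = rho cs (v * cs.simple i) β := by
        rw [map_mul, Module.End.mul_apply, rho_simple]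
      rwa [this]
    · intro hmem
      rw [Set.mem_singleton_iff] at hmem
      apply root_ne_zero cs hr
      have := congrArg (sig M i) hmem
      rw [sig_sig, sig_al_self] at this
      rw [this] at hp ⊢
      exact (by
        have := Pos_al (B := B) i
        have hcontra : Pos (-al i : V B) := hp
        exfalso
        apply not_Pos_and_NegV hcontra
        exact ⟨fun b => by simpa using (Pos_al (B := B) i).1 b, by simpa using this.2⟩)
  · rintro ⟨γ, ⟨⟨hr, hp, hn⟩, hγne⟩, rfl⟩
    rw [Set.mem_singleton_iff] at hγne
    refine ⟨?_, sig_perm cs i hr hp hγne, ?_⟩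
    · have := root_rho cs (cs.simple i) hr
      rwa [rho_simple] at this
    · have : rho cs (v * cs.simple i) (sig M i γ) = rho cs v γ := by
        rw [map_mul, Module.End.mul_apply, rho_simple, sig_sig]
      rwa [this]

lemma invSet_finite : ∀ n (v : W), cs.length v ≤ n → (invSet cs v).Finite := by
  intro n
  induction n with
  | zero =>
    intro v hv
    rw [cs.length_eq_zero_iff.mp (Nat.le_zero.mp hv), invSet_one]
    exact Set.finite_empty
  | succ n ih =>
    intro v hv
    by_cases hv1 : v = 1
    · rw [hv1, invSet_one]; exact Set.finite_empty
    obtain ⟨i, hd⟩ := cs.exists_rightDescent_of_ne_one hv1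
    have hlen : cs.length (v * cs.simple i) ≤ n := by
      unfold CoxeterSystem.IsRightDescent at hd
      omega
    have h1 : invSet cs v ⊆ insert (al i) ((sig M i) '' (invSet cs (v * cs.simple i))) := by
      intro β ⟨hr, hp, hn⟩
      by_cases hβ : β = al i
      · exact Or.inl hβ
      · right
        refine ⟨sig M i β, ⟨?_, sig_perm cs i hr hp hβ, ?_⟩, sig_sig i β⟩
        · have := root_rho cs (cs.simple i) hr
          rwa [rho_simple] at this
        · have : rho cs (v * cs.simple i) (sig M i β) = rho cs v β := by
            rw [map_mul, Module.End.mul_apply, rho_simple, sig_sig]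
          rwa [this]
    exact Set.Finite.subset (Set.Finite.insert _ (Set.Finite.image _ (ih _ hlen))) h1

lemma invSet_inj : ∀ n (v v' : W), cs.length v ≤ n → invSet cs v = invSet cs v' → v = v' := by
  intro n
  induction n with
  | zero =>
    intro v v' hv heq
    have hv1 : v = 1 := cs.length_eq_zero_iff.mp (Nat.le_zero.mp hv)
    subst hv1
    by_contra hne
    obtain ⟨i, hd⟩ := cs.exists_rightDescent_of_ne_one (fun h => hne h.symm)
    have : al i ∈ invSet cs (1 : W) := by
      rw [heq]
      exact (al_mem_invSet cs).mpr hd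
    rw [invSet_one] at this
    exact this
  | succ n ih =>
    intro v v' hv heq
    by_cases hv1 : v = 1
    · subst hv1
      by_contra hne
      obtain ⟨i, hd⟩ := cs.exists_rightDescent_of_ne_one (fun h => hne h.symm)
      have : al i ∈ invSet cs (1 : W) := by
        rw [heq]
        exact (al_mem_invSet cs).mpr hd
      rw [invSet_one] at this
      exact this
    obtain ⟨i, hd⟩ := cs.exists_rightDescent_of_ne_one hv1
    have hd' : cs.IsRightDescent v' i := by
      rw [← al_mem_invSet cs, ← heq, al_mem_invSet cs]
      exact hd
    have hlen : cs.length (v * cs.simple i) ≤ n := by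
      unfold CoxeterSystem.IsRightDescent at hd
      omega
    have heq2 : invSet cs (v * cs.simple i) = invSet cs (v' * cs.simple i) := by
      rw [invSet_mul_simple cs hd, invSet_mul_simple cs hd', heq]
    have := ih (v * cs.simple i) (v' * cs.simple i) hlen heq2
    have h3 := congrArg (fun x => x * cs.simple i) this
    simpa [mul_assoc] using h3

end TitsProof

namespace TitsProof
open Real CoxeterSystem List
variable {B : Type} {M : CoxeterMatrix B} {W : Type} [Group W]
variable (cs : CoxeterSystem M W)

/-- the coordinate-sum functional -/
def y0 : Module.Dual ℝ (V B) := Finsupp.lift ℝ ℝ B (fun _ => (1:ℝ))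

lemma y0_apply (v : V B) : y0 v = v.sum (fun _ r => r) := by
  rw [y0, Finsupp.lift_apply]
  simp

lemma y0_pos {v : V B} (h : Pos v) : 0 < y0 v := by
  rw [y0_apply, Finsupp.sum]
  apply Finset.sum_pos'
  · intro b _
    exact h.1 b
  · obtain ⟨b, hb⟩ := Finsupp.support_nonempty_iff.mpr h.2
    exact ⟨b, hb, lt_of_le_of_ne (h.1 b) (Ne.symm (Finsupp.mem_support_iff.mp hb))⟩

lemma y0_neg {v : V B} (h : NegV v) : y0 v < 0 := by
  have hpos : Pos (-v) := by
    refine ⟨fun b => ?_, neg_ne_zero.mpr h.2⟩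
    simp only [Finsupp.coe_neg, Pi.neg_apply]
    linarith [h.1 b]
  have := y0_pos hpos
  rw [map_neg] at this
  linarith

lemma eval_nonneg {f : Module.Dual ℝ (V B)} (hf : ∀ i, 0 ≤ f (al i)) {v : V B}
    (hv : ∀ b, 0 ≤ v b) : 0 ≤ f v := by
  have hv2 : v = v.sum (fun b c => c • al b) := by
    conv_lhs => rw [← Finsupp.sum_single v]
    apply Finsupp.sum_congr
    intro b _
    rw [al, Finsupp.smul_single, smul_eq_mul, mul_one]
  rw [hv2, map_finsuppSum]
  simp only [map_smul, smul_eq_mul]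
  rw [Finsupp.sum]
  apply Finset.sum_nonneg
  intro b _
  exact mul_nonneg (hv b) (hf b)

lemma eval_nonpos {f : Module.Dual ℝ (V B)} (hf : ∀ i, 0 ≤ f (al i)) {v : V B}
    (hv : ∀ b, v b ≤ 0) : f v ≤ 0 := by
  have h := eval_nonneg hf (v := -v) (fun b => by
    simp only [Finsupp.coe_neg, Pi.neg_apply]; linarith [hv b])
  rw [map_neg] at h
  linarith

/-- if `i ∈ T` (i.e. `f (al i) = 0`) then `f` is `σ_i`-invariant -/
lemma f_sig_invariant {f : Module.Dual ℝ (V B)} {i : B} (h : f (al i) = 0) :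
    f ∘ₗ (sig M i) = f := by
  apply LinearMap.ext
  intro v
  rw [LinearMap.comp_apply, sig_apply, map_sub, map_smul, h, smul_eq_mul, mul_zero, sub_zero]

end TitsProof

namespace TitsProof
open Real CoxeterSystem List
variable {B : Type} {M : CoxeterMatrix B} {W : Type} [Group W]
variable (cs : CoxeterSystem M W)

lemma rho_rho (a b : W) (v : V B) : rho cs a (rho cs b v) = rho cs (a * b) v := by
  rw [map_mul, Module.End.mul_apply]

/-- the averaged functional -/
def zfun (Hs : Finset W) : Module.Dual ℝ (V B) := ∑ h ∈ Hs, y0 ∘ₗ (rho cs h⁻¹ : Module.End ℝ (V B))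

lemma zfun_apply (Hs : Finset W) (β : V B) :
    zfun cs Hs β = ∑ h ∈ Hs, y0 (rho cs h⁻¹ β) := by
  rw [zfun, LinearMap.sum_apply]
  rfl

section Hs
variable (Hs : Finset W) (h1 : (1:W) ∈ Hs)
  (hgrp : ∀ g ∈ Hs, ∀ g' ∈ Hs, g⁻¹ * g' ∈ Hs)

include h1 hgrp in
lemma Hs_inv_mem : ∀ g ∈ Hs, g⁻¹ ∈ Hs := by
  intro g hg
  have := hgrp g hg 1 h1
  rwa [mul_one] at this

include h1 hgrp in
lemma zfun_invariant : ∀ h ∈ Hs, (zfun cs Hs) ∘ₗ (rho cs h : Module.End ℝ (V B)) = zfun cs Hs := by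
  intro h hh
  apply LinearMap.ext
  intro β
  rw [LinearMap.comp_apply, zfun_apply, zfun_apply]
  refine Finset.sum_nbij (fun g => h⁻¹ * g) ?_ ?_ ?_ ?_
  · intro a ha
    exact hgrp h hh a ha
  · intro a _ b _ hab
    exact mul_left_cancel hab
  · intro b hb
    refine ⟨h * b, ?_, ?_⟩
    · have hinv : h⁻¹ ∈ Hs := Hs_inv_mem Hs h1 hgrp h hh
      have := hgrp h⁻¹ hinv b hb
      rwa [inv_inv] at this
    · simp
  · intro a _
    rw [rho_rho, mul_inv_rev, inv_inv]

include h1 in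
lemma le0_finite (u : W) :
    {β : V B | IsRoot cs β ∧ Pos β ∧ zfun cs Hs (rho cs u β) ≤ 0}.Finite := by
  apply Set.Finite.subset
    (Set.Finite.biUnion Hs.finite_toSet (fun h _ => invSet_finite cs (cs.length (h⁻¹ * u)) _ le_rfl))
  rintro β ⟨hr, hp, hle⟩
  rw [zfun_apply] at hle
  have hterm : ∀ h, IsRoot cs (rho cs (h⁻¹ * u) β) := fun h => root_rho cs _ hr
  by_cases hallpos : ∀ h ∈ Hs, 0 < y0 (rho cs h⁻¹ (rho cs u β))
  · exfalso
    have := Finset.sum_pos hallpos ⟨1, h1⟩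
    linarith
  · push_neg at hallpos
    obtain ⟨h, hh, hle2⟩ := hallpos
    have hroot : IsRoot cs (rho cs h⁻¹ (rho cs u β)) := by
      rw [rho_rho]; exact hterm h
    have hneg : NegV (rho cs h⁻¹ (rho cs u β)) := by
      rcases root_dichotomy cs hroot with hc | hc
      · exact absurd (y0_pos hc) (not_lt.mpr hle2)
      · exact hc
    rw [Set.mem_iUnion₂]
    exact ⟨h, hh, hr, hp, by rwa [rho_rho] at hneg⟩

include h1 in
lemma negS_finite (u : W) :
    {β : V B | IsRoot cs β ∧ Pos β ∧ zfun cs Hs (rho cs u β) < 0}.Finite := by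
  apply Set.Finite.subset (le0_finite cs Hs h1 u)
  rintro β ⟨hr, hp, hlt⟩
  exact ⟨hr, hp, le_of_lt hlt⟩

include h1 in
lemma dominantize : ∀ (n : ℕ) (u : W),
    {β : V B | IsRoot cs β ∧ Pos β ∧ zfun cs Hs (rho cs u β) < 0}.ncard ≤ n →
    ∃ u' : W, ∀ i : B, 0 ≤ zfun cs Hs (rho cs u' (al i)) := by
  intro n
  induction n with
  | zero =>
    intro u hcard
    refine ⟨u, fun i => ?_⟩
    by_contra hneg
    push_neg at hneg
    have hmem : al i ∈ {β : V B | IsRoot cs β ∧ Pos β ∧ zfun cs Hs (rho cs u β) < 0} :=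
      ⟨root_al cs i, Pos_al i, hneg⟩
    have := (Set.ncard_pos (negS_finite cs Hs h1 u)).mpr ⟨al i, hmem⟩
    omega
  | succ n ih =>
    intro u hcard
    by_cases hdom : ∀ i : B, 0 ≤ zfun cs Hs (rho cs u (al i))
    · exact ⟨u, hdom⟩
    push_neg at hdom
    obtain ⟨i, hneg⟩ := hdom
    apply ih (u * cs.simple i)
    have hsub : {β : V B | IsRoot cs β ∧ Pos β ∧ zfun cs Hs (rho cs (u * cs.simple i) β) < 0}
        ⊆ (sig M i) '' ({β : V B | IsRoot cs β ∧ Pos β ∧ zfun cs Hs (rho cs u β) < 0} \ {al i}) := by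
      rintro β ⟨hr, hp, hlt⟩
      have hβne : β ≠ al i := by
        rintro rfl
        rw [← rho_rho, rho_simple, sig_al_self, map_neg, map_neg] at hlt
        linarith
      have hγ : sig M i β ∈ {β : V B | IsRoot cs β ∧ Pos β ∧ zfun cs Hs (rho cs u β) < 0} := by
        refine ⟨?_, sig_perm cs i hr hp hβne, ?_⟩
        · have := root_rho cs (cs.simple i) hr
          rwa [rho_simple] at this
        · rw [← rho_rho, rho_simple] at hlt
          rwa [show rho cs u (sig M i β) = rho cs u (sig M i β) from rfl]
      have hγne : sig M i β ≠ al i := by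
        classical
        intro hc
        have hβeq : β = - al i := by
          have := congrArg (sig M i) hc
          rwa [sig_sig, sig_al_self] at this
        have h2 := hp.1 i
        rw [hβeq] at h2
        simp only [Finsupp.coe_neg, Pi.neg_apply] at h2
        have h3 : (al i : V B) i = 1 := by rw [al, Finsupp.single_apply, if_pos rfl]
        rw [h3] at h2
        linarith
      exact ⟨sig M i β, ⟨hγ, hγne⟩, sig_sig i β⟩
    have hmem : al i ∈ {β : V B | IsRoot cs β ∧ Pos β ∧ zfun cs Hs (rho cs u β) < 0} :=
      ⟨root_al cs i, Pos_al i, hneg⟩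
    calc {β : V B | IsRoot cs β ∧ Pos β ∧ zfun cs Hs (rho cs (u * cs.simple i) β) < 0}.ncard
        ≤ ((sig M i) '' ({β : V B | IsRoot cs β ∧ Pos β ∧ zfun cs Hs (rho cs u β) < 0} \ {al i})).ncard :=
          Set.ncard_le_ncard hsub (Set.Finite.image _ (Set.Finite.diff (negS_finite cs Hs h1 u)))
      _ ≤ ({β : V B | IsRoot cs β ∧ Pos β ∧ zfun cs Hs (rho cs u β) < 0} \ {al i}).ncard :=
          Set.ncard_image_le (Set.Finite.diff (negS_finite cs Hs h1 u))
      _ = {β : V B | IsRoot cs β ∧ Pos β ∧ zfun cs Hs (rho cs u β) < 0}.ncard - 1 :=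
          Set.ncard_diff_singleton_of_mem hmem
      _ ≤ n := by
          have := (Set.ncard_pos (negS_finite cs Hs h1 u)).mpr ⟨al i, hmem⟩
          omega

end Hs

lemma stab_subset (f : Module.Dual ℝ (V B)) (hdom : ∀ i, 0 ≤ f (al i)) :
    ∀ n (v : W), cs.length v ≤ n → f ∘ₗ (rho cs v : Module.End ℝ (V B)) = f →
    v ∈ Subgroup.closure (cs.simple '' {i | f (al i) = 0}) := by
  intro n
  induction n with
  | zero =>
    intro v hv _
    rw [cs.length_eq_zero_iff.mp (Nat.le_zero.mp hv)]
    exact Subgroup.one_mem _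
  | succ n ih =>
    intro v hv hfix
    by_cases hv1 : v = 1
    · rw [hv1]; exact Subgroup.one_mem _
    obtain ⟨i, hd⟩ := cs.exists_rightDescent_of_ne_one hv1
    have hfal : f (rho cs v (al i)) = f (al i) := by
      have := congrArg (fun g => g (al i)) hfix
      simpa using this
    have hzero : f (al i) = 0 := by
      have hle : f (rho cs v (al i)) ≤ 0 := eval_nonpos hdom (neg_of_descent cs hd).1
      have hge : 0 ≤ f (al i) := hdom i
      linarith [hfal ▸ hle]
    have hiT : i ∈ {i : B | f (al i) = 0} := hzero
    have hfix2 : f ∘ₗ (rho cs (v * cs.simple i) : Module.End ℝ (V B)) = f := by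
      apply LinearMap.ext
      intro w
      rw [LinearMap.comp_apply, ← rho_rho, rho_simple]
      have h2 := congrArg (fun g => g (sig M i w)) hfix
      simp only [LinearMap.comp_apply] at h2
      rw [h2]
      have h3 := congrArg (fun g => g w) (f_sig_invariant (M := M) hzero)
      simpa using h3
    have hlen : cs.length (v * cs.simple i) ≤ n := by
      unfold CoxeterSystem.IsRightDescent at hd
      omega
    have hmem := ih (v * cs.simple i) hlen hfix2
    have : v = (v * cs.simple i) * cs.simple i := by
      rw [mul_assoc, cs.simple_mul_simple_self, mul_one]
    rw [this]
    exact Subgroup.mul_mem _ hmem (Subgroup.subset_closure ⟨i, hiT, rfl⟩)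

lemma closure_fix (f : Module.Dual ℝ (V B)) (T : Set B) (hT : ∀ i ∈ T, f (al i) = 0) :
    ∀ v ∈ Subgroup.closure (cs.simple '' T), f ∘ₗ (rho cs v : Module.End ℝ (V B)) = f := by
  intro v hv
  induction hv using Subgroup.closure_induction with
  | mem x hx =>
    obtain ⟨i, hi, rfl⟩ := hx
    rw [rho_simple]
    exact f_sig_invariant (hT i hi)
  | one =>
    rw [map_one]
    apply LinearMap.ext
    intro w
    rfl
  | mul x y _ _ hx hy =>
    apply LinearMap.ext
    intro w
    have h1 := congrArg (fun g => g w) hy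
    have h2 := congrArg (fun g => g (rho cs y w)) hx
    simp only [LinearMap.comp_apply] at h1 h2 ⊢
    rw [← rho_rho, h2, h1]
  | inv x hxmem hx =>
    apply LinearMap.ext
    intro w
    have h2 := congrArg (fun g => g (rho cs x⁻¹ w)) hx
    simp only [LinearMap.comp_apply] at h2 ⊢
    rw [← h2, rho_rho, mul_inv_cancel, map_one]
    rfl

end TitsProof

open TitsProof

/-- Tits's theorem: every finite subgroup of a Coxeter group `W` is contained in a
conjugate of a parabolic subgroup `W_T` of finite order. -/
theorem finite_subgroup_le_conjugate_finite_parabolic {B : Type} {W : Type} [Group W]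
    (M : CoxeterMatrix B) (cs : CoxeterSystem M W) (H : Subgroup W) (hH : Finite H) :
    ∃ (T : Set B) (w : W), Finite (Subgroup.closure (cs.simple '' T)) ∧
      H ≤ (Subgroup.closure (cs.simple '' T)).map (MulAut.conj w).toMonoidHom := by
  classical
  have hHset : (H : Set W).Finite := Set.finite_coe_iff.mp hH
  set Hs : Finset W := hHset.toFinset with hHs
  have hmemHs : ∀ g : W, g ∈ Hs ↔ g ∈ H := by
    intro g
    rw [hHs, Set.Finite.mem_toFinset]
    rfl
  have h1 : (1:W) ∈ Hs := (hmemHs 1).mpr H.one_mem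
  have hgrp : ∀ g ∈ Hs, ∀ g' ∈ Hs, g⁻¹ * g' ∈ Hs := fun g hg g' hg' =>
    (hmemHs _).mpr (H.mul_mem (H.inv_mem ((hmemHs g).mp hg)) ((hmemHs g').mp hg'))
  obtain ⟨u, hdomu⟩ := dominantize cs Hs h1
    ({β : V B | IsRoot cs β ∧ Pos β ∧ zfun cs Hs (rho cs (1:W) β) < 0}.ncard) 1 le_rfl
  set f : Module.Dual ℝ (V B) := zfun cs Hs ∘ₗ (rho cs u : Module.End ℝ (V B)) with hf
  have hfapp : ∀ v, f v = zfun cs Hs (rho cs u v) := fun v => rfl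
  have hdom : ∀ i, 0 ≤ f (al i) := fun i => hdomu i
  set T : Set B := {i | f (al i) = 0} with hT
  refine ⟨T, u, ?_, ?_⟩
  · -- finiteness
    have hZfin : {β : V B | IsRoot cs β ∧ Pos β ∧ f β = 0}.Finite := by
      apply Set.Finite.subset (le0_finite cs Hs h1 u)
      rintro β ⟨hr, hp, h0⟩
      exact ⟨hr, hp, le_of_eq ((hfapp β) ▸ h0)⟩
    have hKfix := closure_fix cs f T (fun i hi => hi)
    have hinvsub : ∀ v ∈ Subgroup.closure (cs.simple '' T),
        invSet cs v ⊆ {β : V B | IsRoot cs β ∧ Pos β ∧ f β = 0} := by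
      rintro v hv β ⟨hr, hp, hn⟩
      refine ⟨hr, hp, ?_⟩
      have heq : f (rho cs v β) = f β := by
        have := congrArg (fun g => g β) (hKfix v hv)
        simpa using this
      have hle : f (rho cs v β) ≤ 0 := eval_nonpos hdom hn.1
      have hge : 0 ≤ f β := eval_nonneg hdom hp.1
      linarith
    have hKsetfin : ((Subgroup.closure (cs.simple '' T) : Subgroup W) : Set W).Finite := by
      apply Set.Finite.of_finite_image (f := invSet cs)
      · apply Set.Finite.subset (Set.Finite.finite_subsets hZfin)
        rintro S ⟨v, hv, rfl⟩
        exact hinvsub v hv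
      · intro a ha b hb hab
        exact invSet_inj cs (cs.length a) a b le_rfl hab
    exact hKsetfin.to_subtype
  · -- containment
    intro h hh
    have hmem : u⁻¹ * h * u ∈ Subgroup.closure (cs.simple '' T) := by
      apply stab_subset cs f hdom (cs.length (u⁻¹ * h * u)) _ le_rfl
      apply LinearMap.ext
      intro w
      simp only [LinearMap.comp_apply]
      rw [hfapp, rho_rho, show u * (u⁻¹ * h * u) = h * u by group]
      have hz := congrArg (fun g => g (rho cs u w))
        (zfun_invariant cs Hs h1 hgrp h ((hmemHs h).mpr hh))
      simp only [LinearMap.comp_apply] at hz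
      rw [← rho_rho]
      exact hz
    rw [Subgroup.mem_map]
    refine ⟨u⁻¹ * h * u, hmem, ?_⟩
    show u * (u⁻¹ * h * u) * u⁻¹ = h
    group

end
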